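/- The optimization problem: maximize Σ_k w_k log₂(1 + a_k x_k) subject to 0 ≤ x_k ≤ β_k P_k s for all k and Σ_{j=1}^K x_j = 1 - s, over variables (x_1,…,x_K, s), is a convex optimization problem (the objective is concave in (x, s) and the feasible set is convex), and its optimal value equals the optimal value of maximize Σ_k w_k log₂(1 + a_k β_k p_k/(1 + Σ_j β_j p_j)) subject to 0 ≤ p_k ≤ P_k. -/

import Mathlib

private lemma logb2_concave_pt {x y μ ν : ℝ} (hx : 0 < x) (hy : 0 < y)
    (hμ : 0 ≤ μ) (hν : 0 ≤ ν) (h : μ + ν = 1) :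
    μ * Real.logb 2 x + ν * Real.logb 2 y ≤ Real.logb 2 (μ * x + ν * y) := by
  have h2 : (0:ℝ) < Real.log 2 := Real.log_pos one_lt_two
  have hlog := (strictConcaveOn_log_Ioi.concaveOn).2
    (Set.mem_Ioi.mpr hx) (Set.mem_Ioi.mpr hy) hμ hν h
  simp only [smul_eq_mul] at hlog
  simp only [Real.logb, ← mul_div_assoc, ← add_div]
  exact div_le_div_of_nonneg_right hlog h2.le |>.trans_eq rfl

private lemma set_convex (K : ℕ) (β P : Fin K → ℝ) :
    Convex ℝ {q : (Fin K → ℝ) × ℝ |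
        (∀ k, 0 ≤ q.1 k ∧ q.1 k ≤ β k * P k * q.2) ∧ (∑ j, q.1 j) = 1 - q.2} := by
  intro q hq r hr μ ν hμ hν hμν
  obtain ⟨hq1, hq2⟩ := hq
  obtain ⟨hr1, hr2⟩ := hr
  constructor
  · intro k
    have h1 := hq1 k
    have h2 := hr1 k
    have e1 : (μ • q + ν • r).1 k = μ * q.1 k + ν * r.1 k := rfl
    have e2 : (μ • q + ν • r).2 = μ * q.2 + ν * r.2 := rfl
    rw [e1, e2]
    constructor
    · nlinarith [h1.1, h2.1]
    · have t1 := mul_le_mul_of_nonneg_left h1.2 hμ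
      have t2 := mul_le_mul_of_nonneg_left h2.2 hν
      nlinarith
  · show (∑ j, (μ * q.1 j + ν * r.1 j)) = 1 - (μ * q.2 + ν * r.2)
    rw [Finset.sum_add_distrib, ← Finset.mul_sum, ← Finset.mul_sum, hq2, hr2]
    nlinarith

/-- The reformulated sum-SE problem is convex (convex feasible set, concave objective) and
has the same optimal value as the original data-power problem. -/
theorem sumSE_convex_reformulation (K : ℕ) (w a β P : Fin K → ℝ)
    (hw : ∀ k, 0 < w k) (ha : ∀ k, 0 < a k) (hβ : ∀ k, 0 < β k) (hP : ∀ k, 0 < P k) :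
    Convex ℝ {q : (Fin K → ℝ) × ℝ |
        (∀ k, 0 ≤ q.1 k ∧ q.1 k ≤ β k * P k * q.2) ∧ (∑ j, q.1 j) = 1 - q.2} ∧
    ConcaveOn ℝ
      {q : (Fin K → ℝ) × ℝ |
        (∀ k, 0 ≤ q.1 k ∧ q.1 k ≤ β k * P k * q.2) ∧ (∑ j, q.1 j) = 1 - q.2}
      (fun q => ∑ k, w k * Real.logb 2 (1 + a k * q.1 k)) ∧
    sSup ((fun q : (Fin K → ℝ) × ℝ => ∑ k, w k * Real.logb 2 (1 + a k * q.1 k)) ''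
        {q | (∀ k, 0 ≤ q.1 k ∧ q.1 k ≤ β k * P k * q.2) ∧ (∑ j, q.1 j) = 1 - q.2}) =
      sSup ((fun p : Fin K → ℝ =>
          ∑ k, w k * Real.logb 2 (1 + a k * (β k * p k / (1 + ∑ j, β j * p j)))) ''
        {p | ∀ k, 0 ≤ p k ∧ p k ≤ P k}) := by
  refine ⟨set_convex K β P, ?_, ?_⟩
  · -- concavity of the objective
    refine ⟨set_convex K β P, ?_⟩
    intro q hq r hr μ ν hμ hν hμν
    simp only [smul_eq_mul]
    have eq1 : ∀ k, (μ • q + ν • r).1 k = μ * q.1 k + ν * r.1 k := fun k => rfl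
    calc μ • (∑ k, w k * Real.logb 2 (1 + a k * q.1 k))
          + ν • (∑ k, w k * Real.logb 2 (1 + a k * r.1 k))
        = ∑ k, w k * (μ * Real.logb 2 (1 + a k * q.1 k)
            + ν * Real.logb 2 (1 + a k * r.1 k)) := by
          simp only [smul_eq_mul, Finset.mul_sum, ← Finset.sum_add_distrib]
          exact Finset.sum_congr rfl fun k _ => by ring
      _ ≤ ∑ k, w k * Real.logb 2 (1 + a k * (μ • q + ν • r).1 k) := by
          apply Finset.sum_le_sum
          intro k _
          apply mul_le_mul_of_nonneg_left _ (hw k).le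
          have hx : (0:ℝ) < 1 + a k * q.1 k := by
            nlinarith [(hq.1 k).1, (ha k).le, mul_nonneg (ha k).le (hq.1 k).1]
          have hy : (0:ℝ) < 1 + a k * r.1 k := by
            nlinarith [mul_nonneg (ha k).le (hr.1 k).1]
          have := logb2_concave_pt hx hy hμ hν hμν
          rw [eq1 k]
          calc μ * Real.logb 2 (1 + a k * q.1 k) + ν * Real.logb 2 (1 + a k * r.1 k)
              ≤ Real.logb 2 (μ * (1 + a k * q.1 k) + ν * (1 + a k * r.1 k)) := this
            _ = Real.logb 2 (1 + a k * (μ * q.1 k + ν * r.1 k)) := by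
                congr 1; ring_nf; linarith
  · -- equality of optimal values: the image sets coincide
    congr 1
    ext v
    constructor
    · rintro ⟨⟨x, s⟩, ⟨hcon, hsum⟩, rfl⟩
      simp only at hcon hsum ⊢
      have hs : 0 < s := by
        rcases Nat.eq_zero_or_pos K with h0 | hK
        · subst h0
          simp only [Finset.univ_eq_empty, Finset.sum_empty] at hsum
          linarith
        · by_contra h
          push_neg at h
          have hall : ∀ k, x k = 0 := by
            intro k
            have h1 := hcon k
            have : β k * P k * s ≤ 0 :=
              mul_nonpos_of_nonneg_of_nonpos (mul_pos (hβ k) (hP k)).le h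
            linarith [h1.1, h1.2]
          have : (∑ j, x j) = 0 := Finset.sum_eq_zero fun j _ => hall j
          rw [this] at hsum
          linarith
      refine ⟨fun k => x k / (β k * s), ?_, ?_⟩
      · intro k
        have hbs : 0 < β k * s := mul_pos (hβ k) hs
        constructor
        · exact div_nonneg (hcon k).1 hbs.le
        · rw [div_le_iff₀ hbs]
          nlinarith [(hcon k).2]
      · have hden : (∑ j, β j * (x j / (β j * s))) = (1 - s) / s := by
          rw [← hsum, Finset.sum_div]
          exact Finset.sum_congr rfl fun j _ => by
            field_simp [(hβ j).ne', hs.ne']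
        simp only [hden]
        have h1 : 1 + (1 - s) / s = 1 / s := by field_simp; ring
        refine Finset.sum_congr rfl fun k _ => ?_
        rw [h1]
        congr 2
        field_simp [(hβ k).ne', hs.ne']
    · rintro ⟨p, hp, rfl⟩
      have hsum0 : 0 ≤ ∑ j, β j * p j :=
        Finset.sum_nonneg fun j _ => mul_nonneg (hβ j).le (hp j).1
      set D : ℝ := 1 + ∑ j, β j * p j with hD
      have hD0 : 0 < D := by positivity
      refine ⟨(fun k => β k * p k / D, 1 / D), ⟨?_, ?_⟩, ?_⟩
      · intro k
        constructor
        · exact div_nonneg (mul_nonneg (hβ k).le (hp k).1) hD0.le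
        · rw [mul_one_div, div_le_div_iff₀ hD0 hD0]
          have hle : β k * p k ≤ β k * P k := mul_le_mul_of_nonneg_left (hp k).2 (hβ k).le
          exact mul_le_mul_of_nonneg_right hle hD0.le
      · simp only [← Finset.sum_div]
        have : (∑ j, β j * p j) = D - 1 := by rw [hD]; ring
        rw [this]
        field_simp
      · rfl
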